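/- Let g : ℝⁿ → ℝ ∪ {∞} be proper, lower semicontinuous, and convex, and let φ, ψ : [0,∞) → ℝⁿ be two solutions of the differential inclusion x' ∈ −∂g(x) (absolutely continuous, with derivative in −∂g a.e.). Then t ↦ ‖φ(t) − ψ(t)‖ is nonincreasing on [0,∞). -/

import Mathlib

open Set MeasureTheory
open scoped RealInnerProductSpace

/-- Convex subdifferential of an extended-real-valued function. -/
def subdiffE {n : ℕ} (g : EuclideanSpace ℝ (Fin n) → EReal) (x : EuclideanSpace ℝ (Fin n)) :
    Set (EuclideanSpace ℝ (Fin n)) :=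
  {y | ∀ x', g x + ((⟪y, x' - x⟫ : ℝ) : EReal) ≤ g x'}

section Aux
variable {V : Type*} [NormedAddCommGroup V] [InnerProductSpace ℝ V] [CompleteSpace V]

/-- Fubini symmetrization: the "half square" identity for primitives of integrable functions. -/
lemma half_sq_primitive (w : ℝ → V) (s t : ℝ)
    (hw : ∀ a b : ℝ, IntervalIntegrable w volume a b) :
    (2:ℝ) * ∫ r in Ioc s t, (⟪w r, ∫ q in Ioc s r, w q⟫ : ℝ) =
      ‖∫ r in Ioc s t, w r‖ ^ 2 := by
  set μ := volume.restrict (Ioc s t) with hμ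
  have hA : MeasurableSet (Ioc s t) := measurableSet_Ioc
  have hwμ : Integrable w μ := (hw s t).1
  set v := ∫ r in Ioc s t, w r with hv
  set F : ℝ → V := fun r => ∫ q in s..r, w q with hFdef
  have hFc : Continuous F := intervalIntegral.continuous_primitive hw s
  have hFeq : ∀ r ∈ Ioc s t, F r = ∫ q in Ioc s r, w q := fun r hr => by
    rw [hFdef]; exact intervalIntegral.integral_of_le hr.1.le
  have hFeq' : ∀ r, s ≤ r → F r = ∫ q in Ioc s r, w q := fun r hr => by
    rw [hFdef]; exact intervalIntegral.integral_of_le hr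
  obtain ⟨C, hC⟩ : ∃ C, ∀ r ∈ Icc s t, ‖F r‖ ≤ C :=
    isCompact_Icc.exists_bound_of_continuousOn hFc.continuousOn
  -- integrability of r ↦ ⟪w r, F r⟫
  have hIF : Integrable (fun r => (⟪w r, F r⟫ : ℝ)) μ := by
    refine (hwμ.norm.mul_const C).mono' (hwμ.1.inner hFc.aestronglyMeasurable) ?_
    filter_upwards [ae_restrict_mem hA] with r hr
    calc ‖(⟪w r, F r⟫ : ℝ)‖ ≤ ‖w r‖ * ‖F r‖ := norm_inner_le_norm _ _
      _ ≤ ‖w r‖ * C := by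
        exact mul_le_mul_of_nonneg_left (hC r (Ioc_subset_Icc_self hr)) (norm_nonneg _)
  -- G r := v - F r equals the tail integral on Ioc s t
  have hGeq : ∀ r ∈ Ioc s t, v - F r = ∫ q in Ioc r t, w q := by
    intro r hr
    rw [hFeq r hr, sub_eq_iff_eq_add, hv,
      ← Ioc_union_Ioc_eq_Ioc hr.1.le hr.2,
      setIntegral_union (Ioc_disjoint_Ioc_of_le le_rfl) measurableSet_Ioc (hw s r).1 (hw r t).1,
      add_comm]
  have hIG : Integrable (fun r => (⟪w r, v - F r⟫ : ℝ)) μ := by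
    refine (hwμ.norm.mul_const (‖v‖ + C)).mono'
      (hwμ.1.inner (continuous_const.sub hFc).aestronglyMeasurable) ?_
    filter_upwards [ae_restrict_mem hA] with r hr
    calc ‖(⟪w r, v - F r⟫ : ℝ)‖ ≤ ‖w r‖ * ‖v - F r‖ := norm_inner_le_norm _ _
      _ ≤ ‖w r‖ * (‖v‖ + C) := by
        refine mul_le_mul_of_nonneg_left ?_ (norm_nonneg _)
        exact (norm_sub_le _ _).trans (by gcongr; exact hC r (Ioc_subset_Icc_self hr))
  -- Claim 1 : I + I₂ = ‖v‖²
  have hsum : (∫ r in Ioc s t, (⟪w r, F r⟫ : ℝ)) + (∫ r in Ioc s t, (⟪w r, v - F r⟫ : ℝ))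
      = ‖v‖ ^ 2 := by
    rw [← integral_add hIF hIG]
    have : ∀ r ∈ Ioc s t, (⟪w r, F r⟫ : ℝ) + ⟪w r, v - F r⟫ = ⟪v, w r⟫ := by
      intro r hr
      rw [← inner_add_right, add_sub_cancel, real_inner_comm]
    rw [setIntegral_congr_fun hA this, integral_inner hwμ, real_inner_self_eq_norm_sq]
  -- Claim 2 : I₂ = I via Fubini
  have hprodm : AEStronglyMeasurable (fun p : ℝ × ℝ => (⟪w p.1, w p.2⟫ : ℝ)) (μ.prod μ) :=
    hwμ.1.comp_fst.inner hwμ.1.comp_snd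
  have hprodint : Integrable
      (fun p : ℝ × ℝ => if p.1 < p.2 then (⟪w p.1, w p.2⟫ : ℝ) else 0) (μ.prod μ) := by
    have hS : MeasurableSet {p : ℝ × ℝ | p.1 < p.2} :=
      measurableSet_lt measurable_fst measurable_snd
    have : (fun p : ℝ × ℝ => if p.1 < p.2 then (⟪w p.1, w p.2⟫ : ℝ) else 0)
        = {p : ℝ × ℝ | p.1 < p.2}.indicator (fun p => (⟪w p.1, w p.2⟫ : ℝ)) := by
      ext p; simp [Set.indicator_apply]
    rw [this]
    refine (hwμ.norm.mul_prod hwμ.norm).mono' (hprodm.indicator hS) ?_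
    refine Filter.Eventually.of_forall fun p => ?_
    refine (norm_indicator_le_norm_self _ _).trans ?_
    exact norm_inner_le_norm _ _
  have hI2 : (∫ r in Ioc s t, (⟪w r, v - F r⟫ : ℝ))
      = ∫ r in Ioc s t, (⟪w r, F r⟫ : ℝ) := by
    have step1 : (∫ r in Ioc s t, (⟪w r, v - F r⟫ : ℝ))
        = ∫ r, ∫ q, (if r < q then (⟪w r, w q⟫ : ℝ) else 0) ∂μ ∂μ := by
      refine integral_congr_ae ?_
      filter_upwards [ae_restrict_mem hA] with r hr
      rw [hGeq r hr, ← integral_inner (hw r t).1 (w r)]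
      have hset : Ioi r ∩ Ioc s t = Ioc r t := by
        ext q
        simp only [mem_inter_iff, mem_Ioi, mem_Ioc]
        exact ⟨fun h => ⟨h.1, h.2.2⟩, fun h => ⟨h.1, hr.1.trans h.1, h.2⟩⟩
      calc (∫ q in Ioc r t, (⟪w r, w q⟫ : ℝ))
          = ∫ q in Ioi r, (⟪w r, w q⟫ : ℝ) ∂μ := by
            rw [hμ, Measure.restrict_restrict measurableSet_Ioi, hset]
        _ = ∫ q, (if r < q then (⟪w r, w q⟫ : ℝ) else 0) ∂μ := by
            rw [← integral_indicator measurableSet_Ioi]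
            refine integral_congr_ae (Filter.Eventually.of_forall fun q => ?_)
            simp [Set.indicator_apply]
    have step2 : (∫ r, ∫ q, (if r < q then (⟪w r, w q⟫ : ℝ) else 0) ∂μ ∂μ)
        = ∫ q, ∫ r, (if r < q then (⟪w r, w q⟫ : ℝ) else 0) ∂μ ∂μ :=
      integral_integral_swap hprodint
    have step3 : (∫ q, ∫ r, (if r < q then (⟪w r, w q⟫ : ℝ) else 0) ∂μ ∂μ)
        = ∫ q in Ioc s t, (⟪w q, F q⟫ : ℝ) := by
      refine integral_congr_ae ?_
      filter_upwards [ae_restrict_mem hA] with q hq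
      have hset : Iio q ∩ Ioc s t = Ioo s q := by
        ext r
        simp only [mem_inter_iff, mem_Iio, mem_Ioo, mem_Ioc]
        exact ⟨fun h => ⟨h.2.1, h.1⟩, fun h => ⟨h.2, h.1, (h.2.le.trans hq.2)⟩⟩
      calc (∫ r, (if r < q then (⟪w r, w q⟫ : ℝ) else 0) ∂μ)
          = ∫ r in Iio q, (⟪w r, w q⟫ : ℝ) ∂μ := by
            rw [← integral_indicator measurableSet_Iio]
            refine integral_congr_ae (Filter.Eventually.of_forall fun r => ?_)
            simp [Set.indicator_apply]
        _ = ∫ r in Ioo s q, (⟪w r, w q⟫ : ℝ) := by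
            rw [hμ, Measure.restrict_restrict measurableSet_Iio, hset]
        _ = ∫ r in Ioc s q, (⟪w r, w q⟫ : ℝ) := (integral_Ioc_eq_integral_Ioo).symm
        _ = (⟪w q, F q⟫ : ℝ) := by
            rw [hFeq' q hq.1.le]
            rw [← integral_inner (hw s q).1 (w q)]
            refine integral_congr_ae (Filter.Eventually.of_forall fun r => ?_)
            simpa using real_inner_comm (w q) (w r)
    rw [step1, step2, step3]
  have hgoal : (∫ r in Ioc s t, (⟪w r, ∫ q in Ioc s r, w q⟫ : ℝ))
      = ∫ r in Ioc s t, (⟪w r, F r⟫ : ℝ) :=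
    setIntegral_congr_fun hA fun r hr => by rw [hFeq r hr]
  rw [hgoal]
  rw [← hsum, hI2]; ring


lemma norm_sq_expansion (w : ℝ → V) (c : V) (s t : ℝ)
    (hw : ∀ a b : ℝ, IntervalIntegrable w volume a b) :
    ‖c + ∫ r in Ioc s t, w r‖ ^ 2 =
      ‖c‖ ^ 2 + 2 * ∫ r in Ioc s t, (⟪w r, c + ∫ q in Ioc s r, w q⟫ : ℝ) := by
  set μ := volume.restrict (Ioc s t) with hμ
  have hA : MeasurableSet (Ioc s t) := measurableSet_Ioc
  have hwμ : Integrable w μ := (hw s t).1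
  set v := ∫ r in Ioc s t, w r with hv
  set F : ℝ → V := fun r => ∫ q in s..r, w q with hFdef
  have hFc : Continuous F := intervalIntegral.continuous_primitive hw s
  have hFeq : ∀ r ∈ Ioc s t, F r = ∫ q in Ioc s r, w q := fun r hr => by
    rw [hFdef]; exact intervalIntegral.integral_of_le hr.1.le
  obtain ⟨C, hC⟩ : ∃ C, ∀ r ∈ Icc s t, ‖F r‖ ≤ C :=
    isCompact_Icc.exists_bound_of_continuousOn hFc.continuousOn
  have hIF : Integrable (fun r => (⟪w r, F r⟫ : ℝ)) μ := by
    refine (hwμ.norm.mul_const C).mono' (hwμ.1.inner hFc.aestronglyMeasurable) ?_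
    filter_upwards [ae_restrict_mem hA] with r hr
    calc ‖(⟪w r, F r⟫ : ℝ)‖ ≤ ‖w r‖ * ‖F r‖ := norm_inner_le_norm _ _
      _ ≤ ‖w r‖ * C :=
        mul_le_mul_of_nonneg_left (hC r (Ioc_subset_Icc_self hr)) (norm_nonneg _)
  have hJ : (∫ r in Ioc s t, (⟪w r, c + ∫ q in Ioc s r, w q⟫ : ℝ))
      = (⟪c, v⟫ : ℝ) + ∫ r in Ioc s t, (⟪w r, F r⟫ : ℝ) := by
    have h1 : (∫ r in Ioc s t, (⟪w r, c + ∫ q in Ioc s r, w q⟫ : ℝ))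
        = ∫ r in Ioc s t, ((⟪c, w r⟫ : ℝ) + (⟪w r, F r⟫ : ℝ)) := by
      refine setIntegral_congr_fun hA fun r hr => ?_
      rw [← hFeq r hr, inner_add_right, real_inner_comm]
    rw [h1, integral_add (hwμ.const_inner c) hIF, integral_inner hwμ]
  rw [hJ, norm_add_sq_real]
  have h2 : (2:ℝ) * ∫ r in Ioc s t, (⟪w r, F r⟫ : ℝ) = ‖v‖ ^ 2 := by
    rw [← half_sq_primitive w s t hw]
    congr 1
    exact setIntegral_congr_fun hA fun r hr => by rw [hFeq r hr]
  rw [← h2]; ring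

end Aux

lemma subdiffE_ne_top {n : ℕ} (g : EuclideanSpace ℝ (Fin n) → EReal)
    {x0 : EuclideanSpace ℝ (Fin n)} (hx0 : g x0 ≠ ⊤)
    {x y : EuclideanSpace ℝ (Fin n)} (hy : y ∈ subdiffE g x) : g x ≠ ⊤ := by
  intro h
  have hle := hy x0
  rw [h, EReal.top_add_of_ne_bot (EReal.coe_ne_bot _)] at hle
  exact hx0 (top_le_iff.mp hle)

theorem stmt2 {n : ℕ}
    (g : EuclideanSpace ℝ (Fin n) → EReal)
    -- proper
    (hproper : (∀ x, g x ≠ ⊥) ∧ ∃ x, g x ≠ ⊤)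
    -- lower semicontinuous
    (hlsc : LowerSemicontinuous g)
    -- convex
    (hconv : ∀ x y : EuclideanSpace ℝ (Fin n), ∀ a b : ℝ, 0 ≤ a → 0 ≤ b → a + b = 1 →
      g (a • x + b • y) ≤ ((a : EReal) * g x + (b : EReal) * g y))
    (φ φ' ψ ψ' : ℝ → EuclideanSpace ℝ (Fin n))
    -- φ and ψ are locally absolutely continuous with a.e. derivatives φ', ψ'
    (hφint : ∀ T : ℝ, IntervalIntegrable φ' volume 0 T)
    (hφFTC : ∀ t ∈ Ici (0:ℝ), φ t = φ 0 + ∫ s in (0:ℝ)..t, φ' s)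
    (hψint : ∀ T : ℝ, IntervalIntegrable ψ' volume 0 T)
    (hψFTC : ∀ t ∈ Ici (0:ℝ), ψ t = ψ 0 + ∫ s in (0:ℝ)..t, ψ' s)
    -- solutions of x' ∈ -∂g(x) a.e.
    (hφincl : ∀ᵐ t ∂volume, t ∈ Ici (0:ℝ) → -φ' t ∈ subdiffE g (φ t))
    (hψincl : ∀ᵐ t ∂volume, t ∈ Ici (0:ℝ) → -ψ' t ∈ subdiffE g (ψ t)) :
    AntitoneOn (fun t => ‖φ t - ψ t‖) (Ici 0) := by
  intro s hs t ht hst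
  show ‖φ t - ψ t‖ ≤ ‖φ s - ψ s‖
  set w : ℝ → EuclideanSpace ℝ (Fin n) := fun r => φ' r - ψ' r with hwdef
  have hw : ∀ a b : ℝ, IntervalIntegrable w volume a b := fun a b =>
    ((hφint a).symm.trans (hφint b)).sub ((hψint a).symm.trans (hψint b))
  have hu : ∀ r ∈ Ici (0:ℝ), φ r - ψ r = (φ 0 - ψ 0) + ∫ q in (0:ℝ)..r, w q := by
    intro r hr
    rw [hφFTC r hr, hψFTC r hr]
    rw [hwdef]
    rw [intervalIntegral.integral_sub (hφint r) (hψint r)]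
    abel
  have hus : ∀ r, s ≤ r → r ∈ Ici (0:ℝ) →
      φ r - ψ r = (φ s - ψ s) + ∫ q in Ioc s r, w q := by
    intro r hsr hr
    have h3 := (intervalIntegral.integral_add_adjacent_intervals (hw 0 s) (hw s r)).symm
    rw [hu r hr, hu s hs, h3, intervalIntegral.integral_of_le hsr]
    abel
  -- pointwise monotonicity of the subdifferential
  have hneg : ∀ᵐ r ∂(volume.restrict (Ioc s t)), (⟪w r, φ r - ψ r⟫ : ℝ) ≤ 0 := by
    filter_upwards [ae_restrict_of_ae hφincl, ae_restrict_of_ae hψincl,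
      ae_restrict_mem measurableSet_Ioc] with r hr1 hr2 hrmem
    have hr0 : r ∈ Ici (0:ℝ) := le_trans hs hrmem.1.le
    have hr1' := hr1 hr0 (ψ r)
    have hr2' := hr2 hr0 (φ r)
    obtain ⟨x0, hx0⟩ := hproper.2
    have hφtop : g (φ r) ≠ ⊤ := subdiffE_ne_top g hx0 (hr1 hr0)
    have hψtop : g (ψ r) ≠ ⊤ := subdiffE_ne_top g hx0 (hr2 hr0)
    have hAe : ((g (φ r)).toReal : EReal) = g (φ r) := EReal.coe_toReal hφtop (hproper.1 _)
    have hBe : ((g (ψ r)).toReal : EReal) = g (ψ r) := EReal.coe_toReal hψtop (hproper.1 _)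
    rw [← hAe, ← hBe, ← EReal.coe_add, EReal.coe_le_coe_iff] at hr1' hr2'
    have hkey : (⟪-φ' r, ψ r - φ r⟫ : ℝ) + (⟪-ψ' r, φ r - ψ r⟫ : ℝ) ≤ 0 := by linarith
    have heq : (⟪w r, φ r - ψ r⟫ : ℝ)
        = (⟪-φ' r, ψ r - φ r⟫ : ℝ) + (⟪-ψ' r, φ r - ψ r⟫ : ℝ) := by
      rw [hwdef]
      simp only [inner_sub_left, inner_sub_right, inner_neg_left]
      ring
    linarith
  have hineq : ‖φ t - ψ t‖ ^ 2 ≤ ‖φ s - ψ s‖ ^ 2 := by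
    have hexp := norm_sq_expansion w (φ s - ψ s) s t hw
    rw [← hus t hst ht] at hexp
    have hcongr : (∫ r in Ioc s t, (⟪w r, (φ s - ψ s) + ∫ q in Ioc s r, w q⟫ : ℝ))
        = ∫ r in Ioc s t, (⟪w r, φ r - ψ r⟫ : ℝ) := by
      refine setIntegral_congr_fun measurableSet_Ioc fun r hr => ?_
      rw [← hus r hr.1.le (le_trans hs hr.1.le)]
    rw [hcongr] at hexp
    have hJle := integral_nonpos_of_ae hneg
    linarith
  nlinarith [norm_nonneg (φ t - ψ t), norm_nonneg (φ s - ψ s)]
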